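/- If λ'_n is the largest eigenvalue of the combinatorial Laplacian L' = D - A of a weighted graph G on n vertices, then for any vertex set S the weight of the edge cut satisfies ‖B(S)‖ ≤ λ'_n · |S|(n-|S|)/n. In particular MAX-CUT(G) ≤ λ'_n n / 4. -/

import Mathlib

open Matrix BigOperators

lemma rayleigh_le' {n : ℕ} {A : Matrix (Fin n) (Fin n) ℝ} (hA : A.IsHermitian) {μ : ℝ}
    (hμ : ∀ i, hA.eigenvalues i ≤ μ) (x : Fin n → ℝ) :
    x ⬝ᵥ (A *ᵥ x) ≤ μ * (x ⬝ᵥ x) := by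
  set U : Matrix (Fin n) (Fin n) ℝ := (hA.eigenvectorUnitary : Matrix (Fin n) (Fin n) ℝ)
  set y : Fin n → ℝ := star U *ᵥ x with hy
  have hUU : U * star U = 1 := (Unitary.mul_star_self_of_mem hA.eigenvectorUnitary.2)
  have hUUT : U * Uᵀ = 1 := by
    rw [← conjTranspose_eq_transpose_of_trivial, ← star_eq_conjTranspose]; exact hUU
  have hyx : y ⬝ᵥ y = x ⬝ᵥ x := by
    rw [hy, star_eq_conjTranspose, conjTranspose_eq_transpose_of_trivial,
      mulVec_transpose, ← dotProduct_mulVec, ← mulVec_transpose, mulVec_mulVec,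
      hUUT, one_mulVec]
  have hquad : x ⬝ᵥ (A *ᵥ x) = ∑ i, hA.eigenvalues i * (y i * y i) := by
    conv_lhs => rw [hA.spectral_theorem, Unitary.conjStarAlgAut_apply]
    rw [← mulVec_mulVec, ← mulVec_mulVec, dotProduct_mulVec,
      ← mulVec_transpose, ← conjTranspose_eq_transpose_of_trivial,
      ← star_eq_conjTranspose, ← hy]
    simp [dotProduct, mulVec_diagonal]
    exact Finset.sum_congr rfl fun i _ => by ring
  rw [hquad, ← hyx]
  have : μ * (y ⬝ᵥ y) = ∑ i, μ * (y i * y i) := by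
    rw [dotProduct, Finset.mul_sum]
  rw [this]
  exact Finset.sum_le_sum fun i _ => by
    have := mul_self_nonneg (y i); nlinarith [hμ i]

theorem stmt10 {n : ℕ} (hn : 0 < n) (w : Fin n → Fin n → ℝ)
    (hsym : ∀ i j, w i j = w j i) (hnonneg : ∀ i j, 0 ≤ w i j)
    (d : Fin n → ℝ) (hd : ∀ i, d i = ∑ j, w i j)
    (L' : Matrix (Fin n) (Fin n) ℝ)
    (hL' : L' = Matrix.of (fun i j => (if i = j then d i else 0) - w i j))
    (hH : L'.IsHermitian) (μ : ℝ)
    (hμmem : ∃ i, hH.eigenvalues i = μ) (hμmax : ∀ i, hH.eigenvalues i ≤ μ) :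
    ∀ S : Finset (Fin n),
      (∑ i ∈ S, ∑ j ∈ Sᶜ, w i j) ≤ μ * ((S.card : ℝ) * ((n : ℝ) - S.card)) / n ∧
      (∑ i ∈ S, ∑ j ∈ Sᶜ, w i j) ≤ μ * n / 4 := by
  have hN : (0:ℝ) < (n:ℝ) := by exact_mod_cast hn
  -- quadratic form identity
  have key : ∀ x : Fin n → ℝ,
      x ⬝ᵥ (L' *ᵥ x) = ∑ i, ∑ j, w i j * (x i * (x i - x j)) := by
    intro x
    subst hL'
    simp only [dotProduct, mulVec, of_apply, dotProduct, sub_mul, ite_mul, zero_mul,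
      Finset.sum_sub_distrib, Finset.sum_ite_eq, Finset.mem_univ, if_true]
    refine Finset.sum_congr rfl fun i _ => ?_
    rw [hd i, Finset.sum_mul, ← Finset.sum_sub_distrib, Finset.mul_sum]
    exact Finset.sum_congr rfl fun j _ => by ring
  -- μ is nonnegative
  have hμ0 : 0 ≤ μ := by
    set i0 : Fin n := ⟨0, hn⟩
    set x : Fin n → ℝ := Pi.single i0 1 with hx
    have h1 : x ⬝ᵥ (L' *ᵥ x) ≤ μ * (x ⬝ᵥ x) := rayleigh_le' hH hμmax x
    have h2 : x ⬝ᵥ x = 1 := by simp [hx, dotProduct, Pi.single_apply]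
    have h3 : 0 ≤ x ⬝ᵥ (L' *ᵥ x) := by
      have heq : x ⬝ᵥ (L' *ᵥ x) = d i0 - w i0 i0 := by
        simp [hx, hL', dotProduct, mulVec, Pi.single_apply]
      rw [heq, hd i0, sub_nonneg]
      exact Finset.single_le_sum (fun j _ => hnonneg i0 j) (Finset.mem_univ i0)
    nlinarith
  intro S
  set s : ℝ := (S.card : ℝ) with hs
  set x : Fin n → ℝ := fun i => (if i ∈ S then 1 else 0) - s / n with hx
  have hR := rayleigh_le' hH hμmax x
  -- the quadratic form equals the cut
  have hQ : x ⬝ᵥ (L' *ᵥ x) = ∑ i ∈ S, ∑ j ∈ Sᶜ, w i j := by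
    rw [key x]
    have hdiff : ∀ i j, x i - x j = (if i ∈ S then (1:ℝ) else 0) - (if j ∈ S then 1 else 0) := by
      intro i j; simp [hx]
    have swap : ∑ i, ∑ j, w i j * (x i * (x i - x j))
        = ∑ i, ∑ j, w i j * (x j * (x j - x i)) := by
      rw [Finset.sum_comm]
      exact Finset.sum_congr rfl fun i _ => Finset.sum_congr rfl fun j _ => by rw [hsym]
    have double : (2:ℝ) * (∑ i, ∑ j, w i j * (x i * (x i - x j)))
        = ∑ i, ∑ j, w i j * (x i - x j)^2 := by
      rw [two_mul]
      nth_rewrite 2 [swap]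
      rw [← Finset.sum_add_distrib]
      refine Finset.sum_congr rfl fun i _ => ?_
      rw [← Finset.sum_add_distrib]
      exact Finset.sum_congr rfl fun j _ => by ring
    have cut2 : ∑ i, ∑ j, w i j * (x i - x j)^2 = 2 * ∑ i ∈ S, ∑ j ∈ Sᶜ, w i j := by
      have inner : ∀ i, ∑ j, w i j * (x i - x j)^2
          = ∑ j ∈ S, w i j * (x i - x j)^2 + ∑ j ∈ Sᶜ, w i j * (x i - x j)^2 :=
        fun i => (Finset.sum_add_sum_compl S _).symm
      rw [← Finset.sum_add_sum_compl S (fun i => ∑ j, w i j * (x i - x j)^2)]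
      have e1 : ∑ i ∈ S, ∑ j, w i j * (x i - x j)^2 = ∑ i ∈ S, ∑ j ∈ Sᶜ, w i j := by
        refine Finset.sum_congr rfl fun i hi => ?_
        rw [inner i]
        have z1 : ∑ j ∈ S, w i j * (x i - x j)^2 = 0 := by
          refine Finset.sum_eq_zero fun j hj => ?_
          rw [hdiff i j]; simp [hi, hj]
        have z2 : ∑ j ∈ Sᶜ, w i j * (x i - x j)^2 = ∑ j ∈ Sᶜ, w i j := by
          refine Finset.sum_congr rfl fun j hj => ?_
          rw [hdiff i j]; simp [hi, Finset.mem_compl.mp hj]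
        rw [z1, z2, zero_add]
      have e2 : ∑ i ∈ Sᶜ, ∑ j, w i j * (x i - x j)^2 = ∑ i ∈ S, ∑ j ∈ Sᶜ, w i j := by
        have : ∑ i ∈ Sᶜ, ∑ j, w i j * (x i - x j)^2 = ∑ i ∈ Sᶜ, ∑ j ∈ S, w i j := by
          refine Finset.sum_congr rfl fun i hi => ?_
          rw [inner i]
          have hiS := Finset.mem_compl.mp hi
          have z1 : ∑ j ∈ S, w i j * (x i - x j)^2 = ∑ j ∈ S, w i j := by
            refine Finset.sum_congr rfl fun j hj => ?_
            rw [hdiff i j]; simp [hiS, hj]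
          have z2 : ∑ j ∈ Sᶜ, w i j * (x i - x j)^2 = 0 := by
            refine Finset.sum_eq_zero fun j hj => ?_
            rw [hdiff i j]; simp [hiS, Finset.mem_compl.mp hj]
          rw [z1, z2, add_zero]
        rw [this, Finset.sum_comm]
        exact Finset.sum_congr rfl fun i _ => Finset.sum_congr rfl fun j _ => hsym j i
      rw [e1, e2]; ring
    have h2 : (2:ℝ) * (x ⬝ᵥ (L' *ᵥ x)) = 2 * ∑ i ∈ S, ∑ j ∈ Sᶜ, w i j := by
      rw [key x, double, cut2]
    linarith
  -- the norm
  have hnorm : x ⬝ᵥ x = s * ((n:ℝ) - s) / n := by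
    have card_compl : (Sᶜ.card : ℝ) = (n:ℝ) - s := by
      have hle : S.card ≤ Fintype.card (Fin n) := S.card_le_univ
      rw [Finset.card_compl, Nat.cast_sub hle, Fintype.card_fin, hs]
    rw [dotProduct, ← Finset.sum_add_sum_compl S (fun i => x i * x i)]
    have e1 : ∑ i ∈ S, x i * x i = s * ((1 - s/n) * (1 - s/n)) := by
      have h : ∀ i ∈ S, x i * x i = (1 - s/n) * (1 - s/n) := fun i hi => by
        simp only [hx]; rw [if_pos hi]
      rw [Finset.sum_congr rfl h, Finset.sum_const, nsmul_eq_mul, hs]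
    have e2 : ∑ i ∈ Sᶜ, x i * x i = ((n:ℝ) - s) * ((0 - s/n) * (0 - s/n)) := by
      have h : ∀ i ∈ Sᶜ, x i * x i = (0 - s/n) * (0 - s/n) := fun i hi => by
        simp only [hx]; rw [if_neg (Finset.mem_compl.mp hi)]
      rw [Finset.sum_congr rfl h, Finset.sum_const, nsmul_eq_mul, card_compl]
    rw [e1, e2]
    field_simp
    ring
  have main : (∑ i ∈ S, ∑ j ∈ Sᶜ, w i j) ≤ μ * (s * ((n:ℝ) - s)) / n := by
    rw [← hQ]
    calc x ⬝ᵥ (L' *ᵥ x) ≤ μ * (x ⬝ᵥ x) := hR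
      _ = μ * (s * ((n:ℝ) - s)) / n := by rw [hnorm]; ring
  refine ⟨main, main.trans ?_⟩
  have hsb : 0 ≤ s := by positivity
  have hsq : s * ((n:ℝ) - s) ≤ (n:ℝ)^2 / 4 := by nlinarith [sq_nonneg ((n:ℝ) - 2*s)]
  rw [div_le_div_iff₀ hN (by norm_num : (0:ℝ) < 4)]
  nlinarith
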